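/- Let k ≥ 2 and n = 2^r. The co-Z_{2^k}-linear code H̃_I = Φ(H_I) is a binary (nm, 2^{nm}/(2nm), 4) code with m = 2^{k-1}, i.e., an extended 1-perfect binary code of length n·2^{k-1}. -/

import Mathlib

/-- The weight `wt^◇`. -/
def wtDia {M : ℕ} (x : ZMod M) : ℕ :=
  if x = 0 then 0 else if Odd x.val then 1 else 2

/-- The induced distance `d^◇`. -/
def dDia {M : ℕ} (n : ℕ) (x y : Fin n → ZMod M) : ℕ :=
  ∑ i, wtDia (y i - x i)

/-- Index type for the rows of `B_I`: one row of ones, plus `I j` rows in block `j`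
(`j = 0, …, k-1`, corresponding to `i_{j+1}` in the paper). -/
def colIdx (k : ℕ) (I : Fin k → ℕ) : Type :=
  Unit ⊕ (Σ j : Fin k, Fin (I j))

instance (k : ℕ) (I : Fin k → ℕ) : Fintype (colIdx k I) := by
  unfold colIdx; infer_instance

instance (k : ℕ) (I : Fin k → ℕ) : DecidableEq (colIdx k I) := by
  unfold colIdx; infer_instance

/-- The set `{1} × (2^{k-1}Z_{2^k})^{i_1} × (2^{k-2}Z_{2^k})^{i_2} × … × (2^0 Z_{2^k})^{i_k}`
of columns of `B_I`. -/
def colSet (k : ℕ) (I : Fin k → ℕ) : Set (colIdx k I → ZMod (2 ^ k)) :=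
  {v | v (Sum.inl ()) = 1 ∧
    ∀ (j : Fin k) (t : Fin (I j)),
      ∃ c : ZMod (2 ^ k), v (Sum.inr ⟨j, t⟩) = (2 ^ (k - 1 - j.val) : ZMod (2 ^ k)) * c}

/-- The linear code `H_I = {h | B_I hᵀ = 0}` with parity-check matrix `B_I`,
whose columns are `b 0, …, b (n-1)`. -/
def kerCode (k n : ℕ) {ι : Type} [Fintype ι]
    (b : Fin n → ι → ZMod (2 ^ k)) : Set (Fin n → ZMod (2 ^ k)) :=
  {h | ∀ t : ι, ∑ i, h i * b i t = 0}



lemma arith_two_pow (k : ℕ) (hk : 1 ≤ k) : 2 * 2 ^ (k - 1) = 2 ^ k := by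
  rw [← pow_succ']
  congr 1
  omega

lemma arith_le_pow (k : ℕ) (hk : 1 ≤ k) : k ≤ 2 ^ (k - 1) := by
  have := Nat.lt_two_pow_self (n := k - 1)
  omega

lemma wtDia_parity {k : ℕ} (hk : 1 ≤ k) (x : ZMod (2 ^ k)) :
    ((wtDia x : ℕ) : ZMod 2) = ((x.val : ℕ) : ZMod 2) := by
  have h2k : NeZero (2 ^ k) := ⟨by positivity⟩
  unfold wtDia
  split_ifs with h1 h2
  · subst h1; simp [ZMod.val_zero]
  · rw [Nat.odd_iff] at h2
    rw [ZMod.natCast_eq_natCast_iff']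
    simpa using h2.symm
  · rw [Nat.not_odd_iff] at h2
    rw [ZMod.natCast_eq_natCast_iff']
    simp only [Nat.mod_self]
    omega

lemma wtDia_pos {M : ℕ} {x : ZMod M} (h : x ≠ 0) : 1 ≤ wtDia x := by
  unfold wtDia; split_ifs with h1 h2
  · exact absurd h1 h
  all_goals omega

lemma wtDia_eq_one {M : ℕ} {x : ZMod M} (h : wtDia x = 1) : Odd x.val := by
  unfold wtDia at h; split_ifs at h with h1 h2
  · exact h2
  · exact absurd h (by norm_num)

lemma ker_min_wt (k n : ℕ) (hk : 2 ≤ k) (I : Fin k → ℕ)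
    (b : Fin n → colIdx k I → ZMod (2 ^ k))
    (hb_inj : Function.Injective b) (hb_range : Set.range b = colSet k I)
    (h : Fin n → ZMod (2 ^ k)) (hmem : h ∈ kerCode k n b) (hne : h ≠ 0) :
    4 ≤ ∑ i, wtDia (h i) := by
  classical
  have h2k : NeZero (2 ^ k) := ⟨by positivity⟩
  have hcol : ∀ i, b i ∈ colSet k I := by
    intro i; rw [← hb_range]; exact Set.mem_range_self i
  have hone : ∀ i, b i (Sum.inl ()) = 1 := fun i => (hcol i).1
  have hsum : ∑ i, h i = 0 := by
    have := hmem (Sum.inl ())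
    simpa [hone] using this
  -- parity of total weight
  set W := ∑ i, wtDia (h i) with hW
  have hWpar : (W : ZMod 2) = 0 := by
    have hcastsum : ((∑ i, h i).val : ZMod 2) = ∑ i, ((h i).val : ZMod 2) := by
      have hdvd : (2 : ℕ) ∣ 2 ^ k := dvd_pow_self 2 (by omega)
      have key : ∀ y : ZMod (2 ^ k), ((y.val : ℕ) : ZMod 2) =
          ZMod.castHom hdvd (ZMod 2) y := by
        intro y; rw [ZMod.castHom_apply, ZMod.natCast_val]
      rw [key]
      simp only [map_sum]
      exact Finset.sum_congr rfl fun i _ => (key (h i)).symm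
    rw [hW]
    push_cast
    calc ∑ i, ((wtDia (h i) : ℕ) : ZMod 2) = ∑ i, (((h i).val : ℕ) : ZMod 2) :=
          Finset.sum_congr rfl fun i _ => wtDia_parity (by omega) _
      _ = ((∑ i, h i).val : ZMod 2) := hcastsum.symm
      _ = 0 := by rw [hsum]; simp
  have hWeven : W % 2 = 0 := by
    rwa [ZMod.natCast_eq_zero_iff, Nat.dvd_iff_mod_eq_zero] at hWpar
  by_contra hlt
  push_neg at hlt
  -- support
  set s : Finset (Fin n) := Finset.univ.filter (fun i => h i ≠ 0) with hs
  have hsub : ∀ f : Fin n → ZMod (2 ^ k), (∀ i, h i = 0 → f i = 0) →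
      ∑ i ∈ s, f i = ∑ i, f i := by
    intro f hf
    rw [hs]
    refine Finset.sum_filter_of_ne fun i _ hfi => ?_
    intro h0; exact hfi (hf i h0)
  have hWs : W = ∑ i ∈ s, wtDia (h i) := by
    rw [hW]
    refine (Finset.sum_filter_of_ne fun i _ hfi => ?_).symm
    intro h0; apply hfi; rw [h0]; simp [wtDia]
  have hcard_le : s.card ≤ W := by
    rw [hWs]
    calc s.card = ∑ _i ∈ s, 1 := by simp
      _ ≤ ∑ i ∈ s, wtDia (h i) := Finset.sum_le_sum fun i hi => by
          exact wtDia_pos (by simpa [hs] using hi)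
  have hsne : s.Nonempty := by
    obtain ⟨i, hi⟩ := Function.ne_iff.mp hne
    rw [Pi.zero_apply] at hi
    exact ⟨i, by simp [hs, hi]⟩
  have hscard : 1 ≤ s.card := Finset.card_pos.mpr hsne
  have hW2 : W = 2 := by omega
  have hcases : s.card = 1 ∨ s.card = 2 := by omega
  rcases hcases with hc | hc
  · -- card = 1
    obtain ⟨i0, hi0⟩ := Finset.card_eq_one.mp hc
    have : ∑ i ∈ s, h i = h i0 := by rw [hi0]; simp
    rw [hsub h (fun i h0 => h0), hsum] at this
    have hi0mem : i0 ∈ s := by rw [hi0]; simp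
    rw [hs, Finset.mem_filter] at hi0mem
    exact hi0mem.2 this.symm
  · -- card = 2
    obtain ⟨i1, i2, hne12, hi12⟩ := Finset.card_eq_two.mp hc
    have hwt12 : wtDia (h i1) + wtDia (h i2) = 2 := by
      rw [hW2] at hWs; rw [hi12] at hWs
      simpa [Finset.sum_pair hne12] using hWs.symm
    have h1mem : h i1 ≠ 0 := by
      have hm : i1 ∈ s := by rw [hi12]; simp
      rw [hs, Finset.mem_filter] at hm; exact hm.2
    have h2mem : h i2 ≠ 0 := by
      have hm : i2 ∈ s := by rw [hi12]; simp
      rw [hs, Finset.mem_filter] at hm; exact hm.2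
    have hw1 : wtDia (h i1) = 1 := by
      have := wtDia_pos h1mem; have := wtDia_pos h2mem; omega
    have hodd : Odd (h i1).val := wtDia_eq_one hw1
    have hunit : IsUnit (h i1) := by
      rw [← ZMod.natCast_zmod_val (h i1), ZMod.isUnit_iff_coprime]
      exact Nat.Coprime.pow_right _ (hodd.coprime_two_right)
    have hadd : h i1 + h i2 = 0 := by
      have heq : ∑ i ∈ s, h i = h i1 + h i2 := by rw [hi12, Finset.sum_pair hne12]
      rw [hsub h (fun i h0 => h0), hsum] at heq
      exact heq.symm
    have hbeq : b i1 = b i2 := by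
      funext t
      have ht : ∑ i ∈ s, h i * b i t = 0 := by
        rw [hsub (fun i => h i * b i t) (fun i h0 => by simp [h0])]
        exact hmem t
      rw [hi12, Finset.sum_pair hne12] at ht
      have h2eq : h i2 = -h i1 := by linear_combination hadd
      rw [h2eq] at ht
      have : h i1 * (b i1 t - b i2 t) = 0 := by ring_nf; ring_nf at ht; linear_combination ht
      have := hunit.mul_right_eq_zero.mp this
      linear_combination this
    exact hne12 (hb_inj hbeq)

lemma exp_arith {k v : ℕ} (hk : 1 ≤ k) (hv : v < k) : k - (k - 1 - v) = v + 1 := by omega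

def colP (k : ℕ) (I : Fin k → ℕ) : (Unit ⊕ (Σ j : Fin k, Fin (I j))) → ZMod (2 ^ k) → Prop
  | Sum.inl _ => fun _ => True
  | Sum.inr p => fun x => ∃ c, x = (2 ^ (k - 1 - p.1.val) : ZMod (2 ^ k)) * c

lemma mulSet_iff {k a : ℕ} (ha : a ≤ k) (x : ZMod (2 ^ k)) :
    (∃ c, x = (2 ^ a : ZMod (2 ^ k)) * c) ↔
      ZMod.castHom (pow_dvd_pow 2 ha) (ZMod (2 ^ a)) x = 0 := by
  have h2k : NeZero (2 ^ k) := ⟨by positivity⟩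
  constructor
  · rintro ⟨c, rfl⟩
    rw [map_mul]
    have : (ZMod.castHom (pow_dvd_pow 2 ha) (ZMod (2 ^ a))) (2 ^ a : ZMod (2 ^ k)) = 0 := by
      rw [map_pow, map_ofNat]
      have : ((2 ^ a : ℕ) : ZMod (2 ^ a)) = 0 := ZMod.natCast_self _
      push_cast at this
      exact this
    rw [this, zero_mul]
  · intro h
    rw [ZMod.castHom_apply, ← ZMod.natCast_val, ZMod.natCast_eq_zero_iff] at h
    obtain ⟨d, hd⟩ := h
    refine ⟨(d : ZMod (2 ^ k)), ?_⟩
    have : x = ((x.val : ℕ) : ZMod (2 ^ k)) := (ZMod.natCast_zmod_val x).symm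
    rw [this, hd]
    push_cast
    ring

lemma mulSet_card {k a : ℕ} (ha : a ≤ k) :
    Nat.card {x : ZMod (2 ^ k) // ∃ c, x = (2 ^ a : ZMod (2 ^ k)) * c} = 2 ^ (k - a) := by
  have h2k : NeZero (2 ^ k) := ⟨by positivity⟩
  have hset : ∀ x : ZMod (2 ^ k),
      (∃ c, x = (2 ^ a : ZMod (2 ^ k)) * c) ↔
        x ∈ AddSubgroup.zmultiples ((2 ^ a : ℕ) : ZMod (2 ^ k)) := by
    intro x
    rw [AddSubgroup.mem_zmultiples_iff]
    constructor
    · rintro ⟨c, rfl⟩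
      refine ⟨(c.val : ℤ), ?_⟩
      rw [zsmul_eq_mul]
      push_cast [ZMod.natCast_zmod_val]
      ring
    · rintro ⟨z, rfl⟩
      refine ⟨(z : ZMod (2 ^ k)), ?_⟩
      rw [zsmul_eq_mul]
      push_cast
      ring
  rw [Nat.card_congr (Equiv.subtypeEquivRight hset)]
  rw [Nat.card_zmultiples, ZMod.addOrderOf_coe _ (by positivity)]
  rw [Nat.gcd_eq_right (pow_dvd_pow 2 ha), Nat.pow_div ha (by norm_num)]

section KerCard

variable (k r : ℕ) (I : Fin k → ℕ)

/-- The syndrome map as an `AddMonoidHom`. -/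
def synHom (n : ℕ) (b : Fin n → colIdx k I → ZMod (2 ^ k)) :
    (Fin n → ZMod (2 ^ k)) →+ (colIdx k I → ZMod (2 ^ k)) where
  toFun h := fun t => ∑ i, h i * b i t
  map_zero' := by funext t; simp
  map_add' x y := by funext t; simp [add_mul, Finset.sum_add_distrib]

lemma ker_card (hk : 1 ≤ k) (hI : ∑ j, (j.val + 1) * I j = r)
    (b : Fin (2 ^ r) → colIdx k I → ZMod (2 ^ k))
    (hb_range : Set.range b = colSet k I) :
    Nat.card {h : Fin (2 ^ r) → ZMod (2 ^ k) // h ∈ kerCode k (2 ^ r) b} * 2 ^ (k + r)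
      = 2 ^ (k * 2 ^ r) := by
  classical
  have h2k : NeZero (2 ^ k) := ⟨by positivity⟩
  set φ := synHom k I (2 ^ r) b with hφ
  have hcol : ∀ i, b i ∈ colSet k I := by
    intro i; rw [← hb_range]; exact Set.mem_range_self i
  -- the range of φ
  have hrange : (φ.range : Set (colIdx k I → ZMod (2 ^ k))) =
      {w | ∀ p : Σ j : Fin k, Fin (I j),
        ∃ c, w (Sum.inr p) = (2 ^ (k - 1 - p.1.val) : ZMod (2 ^ k)) * c} := by
    ext w
    constructor
    · rintro ⟨h, rfl⟩
      intro p
      have ha : k - 1 - p.1.val ≤ k := by omega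
      rw [mulSet_iff ha]
      show (ZMod.castHom _ _) (∑ i, h i * b i (Sum.inr p)) = 0
      rw [map_sum]
      refine Finset.sum_eq_zero fun i _ => ?_
      rw [map_mul]
      have := (mulSet_iff ha (b i (Sum.inr p))).mp ((hcol i).2 p.1 p.2)
      rw [this, mul_zero]
    · intro hw
      -- the all-but-first-zero column
      have he : (fun t => match t with
          | Sum.inl _ => 1
          | Sum.inr _ => 0 : colIdx k I → ZMod (2 ^ k)) ∈ colSet k I :=
        ⟨rfl, fun j t => ⟨0, by simp⟩⟩
      rw [← hb_range] at he
      obtain ⟨ie, hie⟩ := he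
      have hv : (fun t => match t with
          | Sum.inl _ => 1
          | Sum.inr p => w (Sum.inr p) : colIdx k I → ZMod (2 ^ k)) ∈ colSet k I :=
        ⟨rfl, fun j t => hw ⟨j, t⟩⟩
      rw [← hb_range] at hv
      obtain ⟨iv, hiv⟩ := hv
      refine ⟨(Pi.single iv 1 : Fin (2 ^ r) → ZMod (2 ^ k)) +
        (Pi.single ie (w (Sum.inl ()) - 1) : Fin (2 ^ r) → ZMod (2 ^ k)), ?_⟩
      have hsingle : ∀ (i0 : Fin (2 ^ r)) (c : ZMod (2 ^ k)) (t : colIdx k I),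
          ∑ i, (Pi.single i0 c : Fin (2 ^ r) → ZMod (2 ^ k)) i * b i t = c * b i0 t := by
        intro i0 c t
        rw [Finset.sum_eq_single i0]
        · simp
        · intro i _ hne; simp [Pi.single_apply, hne]
        · simp
      funext t
      show ∑ i, ((Pi.single iv 1 : Fin (2 ^ r) → ZMod (2 ^ k)) +
        (Pi.single ie (w (Sum.inl ()) - 1) : Fin (2 ^ r) → ZMod (2 ^ k))) i * b i t = w t
      simp only [Pi.add_apply, add_mul, Finset.sum_add_distrib, hsingle, one_mul]
      rw [hie, hiv]
      cases t with
      | inl u => cases u; simp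
      | inr p => simp
  -- cardinality of the range
  have hrange_card : Nat.card φ.range = 2 ^ (k + r) := by
    have hstep : Nat.card φ.range = Nat.card {w : colIdx k I → ZMod (2 ^ k) |
        ∀ p : Σ j : Fin k, Fin (I j),
          ∃ c, w (Sum.inr p) = (2 ^ (k - 1 - p.1.val) : ZMod (2 ^ k)) * c} :=
      Nat.card_congr (Equiv.setCongr hrange)
    rw [hstep]
    -- rewrite as a pi-type condition
    have hQ : {w : colIdx k I → ZMod (2 ^ k) | ∀ p : Σ j : Fin k, Fin (I j),
        ∃ c, w (Sum.inr p) = (2 ^ (k - 1 - p.1.val) : ZMod (2 ^ k)) * c} =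
        {w : colIdx k I → ZMod (2 ^ k) | ∀ t, colP k I t (w t)} := by
      ext w
      constructor
      · intro hw t
        match t with
        | Sum.inl u => trivial
        | Sum.inr p => exact hw p
      · intro hw p
        exact hw (Sum.inr p)
    rw [hQ]
    have e1 : Nat.card {w : colIdx k I → ZMod (2 ^ k) | ∀ t, colP k I t (w t)}
        = Nat.card (∀ t : colIdx k I, {x : ZMod (2 ^ k) // colP k I t x}) :=
      Nat.card_congr (Equiv.subtypePiEquivPi (p := colP k I))
    rw [e1, Nat.card_pi]
    have e2 : ∏ t : colIdx k I, Nat.card {x : ZMod (2 ^ k) // colP k I t x}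
        = (∏ u : Unit, Nat.card {x : ZMod (2 ^ k) // colP k I (Sum.inl u) x}) *
          ∏ p : Σ j : Fin k, Fin (I j),
            Nat.card {x : ZMod (2 ^ k) // colP k I (Sum.inr p) x} :=
      Fintype.prod_sum_type _
    rw [e2]
    have h1 : ∀ u : Unit, Nat.card {x : ZMod (2 ^ k) // colP k I (Sum.inl u) x} = 2 ^ k := by
      intro u
      show Nat.card {x : ZMod (2 ^ k) // True} = 2 ^ k
      rw [Nat.card_congr (Equiv.subtypeUnivEquiv fun _ => trivial), Nat.card_zmod]
    have h2 : ∀ p : Σ j : Fin k, Fin (I j),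
        Nat.card {x : ZMod (2 ^ k) // colP k I (Sum.inr p) x} = 2 ^ (p.1.val + 1) := by
      intro p
      have ha : k - 1 - p.1.val ≤ k := (Nat.sub_le _ _).trans (Nat.sub_le _ _)
      show Nat.card {x : ZMod (2 ^ k) // ∃ c, x = (2 ^ (k - 1 - p.1.val) : ZMod (2 ^ k)) * c}
        = 2 ^ (p.1.val + 1)
      rw [mulSet_card ha]
      rw [exp_arith hk p.1.isLt]
    calc (∏ u : Unit, Nat.card {x : ZMod (2 ^ k) // colP k I (Sum.inl u) x}) *
          ∏ p : Σ j : Fin k, Fin (I j),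
            Nat.card {x : ZMod (2 ^ k) // colP k I (Sum.inr p) x}
          = 2 ^ k * ∏ p : Σ j : Fin k, Fin (I j), 2 ^ (p.1.val + 1) := by
          rw [Fintype.prod_congr _ _ h1, Fintype.prod_congr _ _ h2]
          simp
      _ = 2 ^ k * 2 ^ r := by
          congr 1
          rw [← Finset.univ_sigma_univ, Finset.prod_sigma]
          calc ∏ j : Fin k, ∏ _t : Fin (I j), 2 ^ (j.val + 1)
              = ∏ j : Fin k, 2 ^ ((j.val + 1) * I j) := by
                refine Finset.prod_congr rfl fun j _ => ?_
                rw [Finset.prod_const, ← pow_mul, Finset.card_univ, Fintype.card_fin,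
                  mul_comm]
            _ = 2 ^ (∑ j, (j.val + 1) * I j) := by rw [Finset.prod_pow_eq_pow_sum]
            _ = 2 ^ r := by rw [hI]
      _ = 2 ^ (k + r) := by rw [pow_add]
  -- first isomorphism theorem
  have hdom : Nat.card (Fin (2 ^ r) → ZMod (2 ^ k)) = 2 ^ (k * 2 ^ r) := by
    rw [Nat.card_fun, Nat.card_zmod, Nat.card_eq_fintype_card, Fintype.card_fin, ← pow_mul]
  have hker_set : {h : Fin (2 ^ r) → ZMod (2 ^ k) // h ∈ kerCode k (2 ^ r) b}
      = {h : Fin (2 ^ r) → ZMod (2 ^ k) // h ∈ φ.ker} := by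
    congr 1
    ext h
    constructor
    · intro hh; exact funext hh
    · intro hh t; exact congrFun hh t
  have := AddSubgroup.card_eq_card_quotient_mul_card_addSubgroup φ.ker
  rw [hdom] at this
  rw [Nat.card_congr (QuotientAddGroup.quotientKerEquivRange φ).toEquiv, hrange_card] at this
  rw [hker_set]
  rw [this]
  ring

end KerCard

lemma distParity {ι : Type*} [Fintype ι] (u v : ι → ZMod 2) :
    ((hammingDist u v : ℕ) : ZMod 2) = (hammingNorm u : ℕ) + (hammingNorm v : ℕ) := by
  classical
  rw [hammingDist, hammingNorm, hammingNorm, Finset.card_filter, Finset.card_filter,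
    Finset.card_filter]
  push_cast
  rw [← Finset.sum_add_distrib]
  refine Finset.sum_congr rfl fun i _ => ?_
  generalize u i = a; generalize v i = b
  revert a b; decide

lemma hamming_rows {n m : ℕ} (u v : Fin n × Fin m → ZMod 2) :
    hammingDist u v = ∑ i, hammingDist (fun j => u (i, j)) (fun j => v (i, j)) := by
  classical
  rw [hammingDist, Finset.card_filter, Fintype.sum_prod_type]
  refine Finset.sum_congr rfl fun i _ => ?_
  rw [hammingDist, Finset.card_filter]

lemma row_bound {k m : ℕ} (hk : 2 ≤ k)
    (H : ZMod (2 ^ k) → Finset (Fin m → ZMod 2))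
    (hpart : ∀ u : Fin m → ZMod 2, ∃! j, u ∈ H j)
    (hparity : ∀ j, ∀ u ∈ H j, hammingNorm u % 2 = (ZMod.val j) % 2)
    (a c : ZMod (2 ^ k)) (ru rv : Fin m → ZMod 2)
    (hru : ru ∈ H a) (hrv : rv ∈ H c) :
    wtDia (c - a) ≤ hammingDist ru rv := by
  have h2k : NeZero (2 ^ k) := ⟨by positivity⟩
  by_cases hac : a = c
  · subst hac
    simp [wtDia]
  · have hne : ru ≠ rv := by
      intro hEq
      subst hEq
      obtain ⟨j0, _, huni⟩ := hpart ru
      exact hac ((huni a hru).trans (huni c hrv).symm)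
    have h1 : 1 ≤ hammingDist ru rv := by
      rcases Nat.eq_zero_or_pos (hammingDist ru rv) with h0 | h0
      · exact absurd (eq_of_hammingDist_eq_zero h0) hne
      · exact h0
    have hca : c - a ≠ 0 := sub_ne_zero.mpr (Ne.symm hac)
    unfold wtDia
    rw [if_neg hca]
    split_ifs with hodd
    · exact h1
    · -- even case: the distance is even
      have hdvd : (2 : ℕ) ∣ 2 ^ k := dvd_pow_self 2 (by omega)
      have key : ∀ y : ZMod (2 ^ k), ((y.val : ℕ) : ZMod 2) =
          ZMod.castHom hdvd (ZMod 2) y := by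
        intro y; rw [ZMod.castHom_apply, ZMod.natCast_val]
      have hca2 : ZMod.castHom hdvd (ZMod 2) (c - a) = 0 := by
        rw [← key, ZMod.natCast_eq_zero_iff]
        rw [Nat.not_odd_iff] at hodd
        omega
      have hsum : ZMod.castHom hdvd (ZMod 2) c = ZMod.castHom hdvd (ZMod 2) a := by
        have := map_sub (ZMod.castHom hdvd (ZMod 2)) c a
        rw [hca2] at this
        linear_combination -this
      have hpar : ((hammingDist ru rv : ℕ) : ZMod 2) = 0 := by
        rw [distParity]
        have h1' : ((hammingNorm ru : ℕ) : ZMod 2) = ((a.val : ℕ) : ZMod 2) := by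
          rw [ZMod.natCast_eq_natCast_iff']
          simpa using hparity a ru hru
        have h2' : ((hammingNorm rv : ℕ) : ZMod 2) = ((c.val : ℕ) : ZMod 2) := by
          rw [ZMod.natCast_eq_natCast_iff']
          simpa using hparity c rv hrv
        rw [h1', h2', key, key, hsum]
        exact CharTwo.add_self_eq_zero _
      rw [ZMod.natCast_eq_zero_iff] at hpar
      omega

lemma S_card (k r : ℕ) {ι : Type} [Fintype ι] (hk : 2 ≤ k)
    (b : Fin (2 ^ r) → ι → ZMod (2 ^ k))
    (H : ZMod (2 ^ k) → Finset (Fin (2 ^ (k - 1)) → ZMod 2))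
    (hpart : ∀ u : Fin (2 ^ (k - 1)) → ZMod 2, ∃! j, u ∈ H j)
    (hcard : ∀ j, (H j).card = 2 ^ (2 ^ (k - 1)) / (2 * 2 ^ (k - 1))) :
    Nat.card {u : Fin (2 ^ r) × Fin (2 ^ (k - 1)) → ZMod 2 //
        ∃ x ∈ kerCode k (2 ^ r) b, ∀ i, (fun j => u (i, j)) ∈ H (x i)}
      = Nat.card {h : Fin (2 ^ r) → ZMod (2 ^ k) // h ∈ kerCode k (2 ^ r) b}
          * 2 ^ ((2 ^ (k - 1) - k) * 2 ^ r) := by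
  classical
  have hkm : k ≤ 2 ^ (k - 1) := by
    have := Nat.lt_two_pow_self (n := k - 1)
    omega
  have hHc : ∀ j, (H j).card = 2 ^ (2 ^ (k - 1) - k) := by
    intro j
    rw [hcard j]
    have h2m : 2 * 2 ^ (k - 1) = 2 ^ k := by
      rw [← pow_succ']
      congr 1
      omega
    rw [h2m, Nat.pow_div hkm (by norm_num)]
  set K := {h : Fin (2 ^ r) → ZMod (2 ^ k) // h ∈ kerCode k (2 ^ r) b} with hK
  let F : (Σ x : K, ∀ i : Fin (2 ^ r), {y : Fin (2 ^ (k - 1)) → ZMod 2 // y ∈ H (x.1 i)}) →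
      {u : Fin (2 ^ r) × Fin (2 ^ (k - 1)) → ZMod 2 //
        ∃ x ∈ kerCode k (2 ^ r) b, ∀ i, (fun j => u (i, j)) ∈ H (x i)} :=
    fun a => ⟨fun p => (a.2 p.1).1 p.2, ⟨a.1.1, a.1.2, fun i => (a.2 i).2⟩⟩
  have hbij : Function.Bijective F := by
    constructor
    · rintro ⟨⟨x1, hx1⟩, g1⟩ ⟨⟨x2, hx2⟩, g2⟩ hEq
      have hf := congrArg Subtype.val hEq
      have hrow : ∀ i, (g1 i).1 = (g2 i).1 := by
        intro i
        funext j
        exact congrFun hf (i, j)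
      have hx : x1 = x2 := by
        funext i
        obtain ⟨j0, _, huni⟩ := hpart ((g1 i).1)
        have m1 : (g1 i).1 ∈ H (x1 i) := (g1 i).2
        have m2 : (g1 i).1 ∈ H (x2 i) := by rw [hrow i]; exact (g2 i).2
        exact (huni _ m1).trans (huni _ m2).symm
      subst hx
      have : g1 = g2 := by
        funext i
        exact Subtype.ext (hrow i)
      rw [this]
    · rintro ⟨u, x, hx, hrow⟩
      refine ⟨⟨⟨x, hx⟩, fun i => ⟨fun j => u (i, j), hrow i⟩⟩, ?_⟩
      refine Subtype.ext (funext fun p => ?_)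
      show u (p.1, p.2) = u p
      rfl
  rw [← Nat.card_eq_of_bijective F hbij]
  rw [Nat.card_eq_fintype_card, Fintype.card_sigma]
  have hfiber : ∀ x : K, Fintype.card
      (∀ i : Fin (2 ^ r), {y : Fin (2 ^ (k - 1)) → ZMod 2 // y ∈ H (x.1 i)})
      = 2 ^ ((2 ^ (k - 1) - k) * 2 ^ r) := by
    intro x
    rw [Fintype.card_pi]
    calc ∏ i : Fin (2 ^ r), Fintype.card {y : Fin (2 ^ (k - 1)) → ZMod 2 // y ∈ H (x.1 i)}
        = ∏ _i : Fin (2 ^ r), 2 ^ (2 ^ (k - 1) - k) := by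
          refine Finset.prod_congr rfl fun i _ => ?_
          rw [Fintype.card_coe]
          exact hHc _
      _ = 2 ^ ((2 ^ (k - 1) - k) * 2 ^ r) := by
          rw [Finset.prod_const, ← pow_mul, Finset.card_univ, Fintype.card_fin]
  calc (∑ x : K, Fintype.card (∀ i : Fin (2 ^ r), {y : Fin (2 ^ (k - 1)) → ZMod 2 // y ∈ H (x.1 i)}))
      = ∑ _x : K, 2 ^ ((2 ^ (k - 1) - k) * 2 ^ r) :=
        Finset.sum_congr rfl fun x _ => hfiber x
    _ = Nat.card K * 2 ^ ((2 ^ (k - 1) - k) * 2 ^ r) := by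
        rw [Finset.sum_const, Finset.card_univ, Nat.card_eq_fintype_card, smul_eq_mul]

/-- The co-`Z_{2^k}`-linear code `H̃_I = Φ(H_I)` is a binary
`(nm, 2^{nm}/(2nm), 4)` code with `m = 2^{k-1}`, `n = 2^r`: an extended
1-perfect binary code of length `n·2^{k-1}`. -/
theorem stmt_14 (k r : ℕ) (hk : 2 ≤ k) (I : Fin k → ℕ)
    (hI : ∑ j, (j.val + 1) * I j = r)
    (b : Fin (2 ^ r) → colIdx k I → ZMod (2 ^ k))
    (hb_inj : Function.Injective b)
    (hb_range : Set.range b = colSet k I)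
    (H : ZMod (2 ^ k) → Finset (Fin (2 ^ (k - 1)) → ZMod 2))
    (hpart : ∀ u : Fin (2 ^ (k - 1)) → ZMod 2, ∃! j, u ∈ H j)
    (hcard : ∀ j, (H j).card = 2 ^ (2 ^ (k - 1)) / (2 * 2 ^ (k - 1)))
    (hdist4 : ∀ j, ∀ u ∈ H j, ∀ v ∈ H j, u ≠ v → 4 ≤ hammingDist u v)
    (hzero : (0 : Fin (2 ^ (k - 1)) → ZMod 2) ∈ H 0)
    (hparity : ∀ j, ∀ u ∈ H j, hammingNorm u % 2 = (ZMod.val j) % 2) :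
    ({u : Fin (2 ^ r) × Fin (2 ^ (k - 1)) → ZMod 2 |
        ∃ x ∈ kerCode k (2 ^ r) b, ∀ i, (fun j => u (i, j)) ∈ H (x i)}.ncard
        = 2 ^ (2 ^ r * 2 ^ (k - 1)) / (2 * (2 ^ r * 2 ^ (k - 1)))) ∧
      ∀ u ∈ {u : Fin (2 ^ r) × Fin (2 ^ (k - 1)) → ZMod 2 |
          ∃ x ∈ kerCode k (2 ^ r) b, ∀ i, (fun j => u (i, j)) ∈ H (x i)},
        ∀ v ∈ {u : Fin (2 ^ r) × Fin (2 ^ (k - 1)) → ZMod 2 |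
          ∃ x ∈ kerCode k (2 ^ r) b, ∀ i, (fun j => u (i, j)) ∈ H (x i)},
        u ≠ v → 4 ≤ hammingDist u v := by
  classical
  have h2k : NeZero (2 ^ k) := ⟨by positivity⟩
  have hS := S_card k r hk b H hpart hcard
  have hK := ker_card k r I (Nat.le_of_succ_le hk) hI b hb_range
  constructor
  · -- cardinality
    rw [← Nat.card_coe_set_eq]
    have hSc : Nat.card {u : Fin (2 ^ r) × Fin (2 ^ (k - 1)) → ZMod 2 |
        ∃ x ∈ kerCode k (2 ^ r) b, ∀ i, (fun j => u (i, j)) ∈ H (x i)}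
        = Nat.card {h : Fin (2 ^ r) → ZMod (2 ^ k) // h ∈ kerCode k (2 ^ r) b}
          * 2 ^ ((2 ^ (k - 1) - k) * 2 ^ r) := hS
    have hB : 2 * (2 ^ r * 2 ^ (k - 1)) = 2 ^ (k + r) := by
      calc 2 * (2 ^ r * 2 ^ (k - 1)) = (2 * 2 ^ (k - 1)) * 2 ^ r := by ring
        _ = 2 ^ k * 2 ^ r := by rw [arith_two_pow k (Nat.le_of_succ_le hk)]
        _ = 2 ^ (k + r) := (pow_add 2 k r).symm
    have hkm : k ≤ 2 ^ (k - 1) := arith_le_pow k (Nat.le_of_succ_le hk)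
    have hexp : k * 2 ^ r + (2 ^ (k - 1) - k) * 2 ^ r = 2 ^ r * 2 ^ (k - 1) := by
      rw [← Nat.add_mul, Nat.add_sub_cancel' hkm, Nat.mul_comm]
    have hA : 2 ^ (2 ^ r * 2 ^ (k - 1)) =
        Nat.card {u : Fin (2 ^ r) × Fin (2 ^ (k - 1)) → ZMod 2 |
          ∃ x ∈ kerCode k (2 ^ r) b, ∀ i, (fun j => u (i, j)) ∈ H (x i)}
          * (2 * (2 ^ r * 2 ^ (k - 1))) := by
      rw [hSc, hB]
      calc 2 ^ (2 ^ r * 2 ^ (k - 1))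
          = 2 ^ (k * 2 ^ r + (2 ^ (k - 1) - k) * 2 ^ r) := by rw [hexp]
        _ = 2 ^ (k * 2 ^ r) * 2 ^ ((2 ^ (k - 1) - k) * 2 ^ r) := pow_add 2 _ _
        _ = (Nat.card {h : Fin (2 ^ r) → ZMod (2 ^ k) // h ∈ kerCode k (2 ^ r) b}
              * 2 ^ (k + r)) * 2 ^ ((2 ^ (k - 1) - k) * 2 ^ r) := by rw [hK]
        _ = Nat.card {h : Fin (2 ^ r) → ZMod (2 ^ k) // h ∈ kerCode k (2 ^ r) b}
              * 2 ^ ((2 ^ (k - 1) - k) * 2 ^ r) * 2 ^ (k + r) := by ring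
    exact (Nat.div_eq_of_eq_mul_left (by positivity) hA).symm
  · -- minimum distance
    intro u hu v hv huv
    obtain ⟨x, hx, hxu⟩ := hu
    obtain ⟨y, hy, hyv⟩ := hv
    rw [hamming_rows]
    by_cases hxy : x = y
    · subst hxy
      have hex : ∃ p : Fin (2 ^ r) × Fin (2 ^ (k - 1)), u p ≠ v p := by
        by_contra hall
        push_neg at hall
        exact huv (funext fun p => hall p)
      obtain ⟨⟨i, j⟩, hp⟩ := hex
      have hrows : (fun j => u (i, j)) ≠ (fun j => v (i, j)) :=
        fun hEq => hp (congrFun hEq j)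
      calc 4 ≤ hammingDist (fun j => u (i, j)) (fun j => v (i, j)) :=
            hdist4 (x i) _ (hxu i) _ (hyv i) hrows
        _ ≤ ∑ i, hammingDist (fun j => u (i, j)) (fun j => v (i, j)) :=
            Finset.single_le_sum
              (f := fun i => hammingDist (fun j => u (i, j)) (fun j => v (i, j)))
              (fun _ _ => Nat.zero_le _) (Finset.mem_univ i)
    · have hker : (y - x) ∈ kerCode k (2 ^ r) b := by
        intro t
        simp only [Pi.sub_apply, sub_mul, Finset.sum_sub_distrib]
        rw [hy t, hx t]
        simp
      have hne : y - x ≠ 0 := sub_ne_zero.mpr (Ne.symm hxy)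
      calc 4 ≤ ∑ i, wtDia ((y - x) i) :=
            ker_min_wt k (2 ^ r) hk I b hb_inj hb_range (y - x) hker hne
        _ ≤ ∑ i, hammingDist (fun j => u (i, j)) (fun j => v (i, j)) := by
            refine Finset.sum_le_sum fun i _ => ?_
            exact row_bound hk H hpart hparity (x i) (y i) _ _ (hxu i) (hyv i)
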